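/- Fix an integer d ≥ 3. Define cn_n(d) by the identity in ℝ[[X]]: Σ_{n≥0} (n!)^{d−2}·X^n = exp(Σ_{n≥1} cn_n(d) X^n/n!), and define imp_k(d−2) by Σ_{k≥1} imp_k(d−2) X^k = 1 − (Σ_{n≥0} (n!)^{d−2}·X^n)^{−1}. Then for every integer r ≥ 0, as n → ∞, cn_n(d)/(n!)^{d−1} = 1 − Σ_{k=1}^{r} imp_k(d−2)/((n)_k)^{d−2} + O(1/n^{(r+1)(d−2)}), where (n)_k = n(n−1)⋯(n−k+1). Equivalently, the number cn_n(d) of d-constellations of size n satisfies cn_n(d) = (n!)^{d−1}·(1 − Σ_{k=1}^{r} imp_k(d−2)/((n)_k)^{d−2} + O(n^{−(r+1)(d−2)})). -/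

import Mathlib

open Filter Asymptotics Finset

/-- A real sequence `u` is *gargantuan* if `u (n-1) / u n → 0` and, for every `r ≥ 1`,
`∑_{k=r}^{n-r} |u k * u (n-k)| = O(u (n-r))` as `n → ∞`. -/
def Gargantuan (u : ℕ → ℝ) : Prop :=
  Tendsto (fun n => u (n - 1) / u n) atTop (nhds 0) ∧
    ∀ r : ℕ, 1 ≤ r →
      (fun n => ∑ k ∈ Finset.Icc r (n - r), |u k * u (n - k)|) =O[atTop]
        fun n => u (n - r)

/-- The exponential `exp C` of a formal power series `C` (intended for `C` with zero
constant term): the coefficient of `X^n` is `∑_{k=0}^{n} [X^n] (C^k) / k!`. -/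
noncomputable def expPS (C : PowerSeries ℝ) : PowerSeries ℝ :=
  PowerSeries.mk fun n =>
    ∑ k ∈ Finset.range (n + 1), (PowerSeries.coeff n (C ^ k)) / (Nat.factorial k)


lemma coeff_pow_eq_zero {L : PowerSeries ℝ} (hL : PowerSeries.constantCoeff L = 0)
    {m k : ℕ} (hmk : m < k) : PowerSeries.coeff m (L ^ k) = 0 := by
  have h1 : (1 : ℕ∞) ≤ L.order := by
    apply PowerSeries.le_order
    intro i hi
    have : i = 0 := by
      by_contra h
      have : (1:ℕ∞) ≤ (i:ℕ∞) := by exact_mod_cast Nat.one_le_iff_ne_zero.2 h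
      exact absurd hi (not_lt.2 this)
    subst this
    simpa [PowerSeries.coeff_zero_eq_constantCoeff] using hL
  have hord : ∀ k : ℕ, (k : ℕ∞) ≤ (L ^ k).order := by
    intro k
    induction k with
    | zero => simp
    | succ k ih =>
      calc ((k+1 : ℕ) : ℕ∞) = (k : ℕ∞) + 1 := by push_cast; ring
        _ ≤ (L^k).order + L.order := add_le_add ih h1
        _ ≤ (L^k * L).order := PowerSeries.le_order_mul _ _
        _ = (L^(k+1)).order := by rw [pow_succ]
  exact PowerSeries.coeff_of_lt_order m (lt_of_lt_of_le (by exact_mod_cast hmk) (hord k))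

/-- key derivative identity: if F = expPS L with L(0)=0 then F' = L' F. -/
lemma deriv_expPS {L : PowerSeries ℝ} (hL : PowerSeries.constantCoeff L = 0) :
    PowerSeries.derivative ℝ (expPS L) = (PowerSeries.derivative ℝ L) * expPS L := by
  ext n
  set T : PowerSeries ℝ := ∑ k ∈ Finset.range (n + 2), (k.factorial : ℝ)⁻¹ • L ^ k with hT
  have hcoeffT : ∀ m, m ≤ n + 1 → PowerSeries.coeff m (expPS L) = PowerSeries.coeff m T := by
    intro m hm
    rw [hT]
    simp only [expPS, PowerSeries.coeff_mk, map_sum, PowerSeries.coeff_smul, smul_eq_mul]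
    rw [Finset.sum_congr rfl (fun k _ => (div_eq_inv_mul _ _ : PowerSeries.coeff m (L^k) / (k.factorial:ℝ) = _))]
    apply Finset.sum_subset
    · intro k hk; simp only [Finset.mem_range] at hk ⊢; omega
    · intro k _ hk
      simp only [Finset.mem_range, not_lt] at hk
      rw [coeff_pow_eq_zero hL (by omega), mul_zero]
  have hderivT : PowerSeries.derivative ℝ T =
      (PowerSeries.derivative ℝ L) * T -
        ((n+1).factorial : ℝ)⁻¹ • ((PowerSeries.derivative ℝ L) * L ^ (n + 1)) := by
    rw [hT, map_sum]
    have hterm : ∀ k : ℕ, PowerSeries.derivative ℝ ((k.factorial : ℝ)⁻¹ • L ^ k) =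
        (k.factorial : ℝ)⁻¹ • ((k : ℕ) • (L ^ (k-1) * PowerSeries.derivative ℝ L)) := by
      intro k
      rw [Derivation.map_smul, Derivation.leibniz_pow]; rfl
    rw [Finset.sum_congr rfl (fun k _ => hterm k)]
    rw [Finset.sum_range_succ']
    have hzero : ((Nat.factorial 0 : ℝ))⁻¹ • ((0:ℕ) • (L ^ (0-1) * PowerSeries.derivative ℝ L)) = 0 := by
      simp
    rw [hzero, add_zero]
    have hterm2 : ∀ j : ℕ, (((j+1).factorial : ℝ))⁻¹ • (((j+1:ℕ)) • (L ^ (j+1-1) * PowerSeries.derivative ℝ L)) =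
        (j.factorial : ℝ)⁻¹ • (L ^ j * PowerSeries.derivative ℝ L) := by
      intro j
      rw [Nat.add_sub_cancel, ← Nat.cast_smul_eq_nsmul ℝ, smul_smul]
      congr 1
      rw [Nat.factorial_succ]
      push_cast
      rw [mul_inv]
      field_simp
    rw [Finset.sum_congr rfl (fun j _ => hterm2 j)]
    have hmul : ∀ j:ℕ, (j.factorial : ℝ)⁻¹ • (L ^ j * PowerSeries.derivative ℝ L) =
        PowerSeries.derivative ℝ L * ((j.factorial : ℝ)⁻¹ • L ^ j) := by
      intro j; rw [mul_smul_comm]; congr 1; ring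
    rw [Finset.sum_congr rfl (fun j _ => hmul j), ← Finset.mul_sum]
    have hsplit : (∑ k ∈ Finset.range (n + 2), (k.factorial : ℝ)⁻¹ • L ^ k) =
        (∑ j ∈ Finset.range (n + 1), (j.factorial : ℝ)⁻¹ • L ^ j) + ((n+1).factorial : ℝ)⁻¹ • L ^ (n+1) :=
      Finset.sum_range_succ _ _
    rw [hsplit, mul_add, mul_smul_comm]
    ring
  -- now extract coefficient n
  rw [PowerSeries.coeff_derivative, hcoeffT (n+1) le_rfl, ← PowerSeries.coeff_derivative, hderivT]
  rw [map_sub, PowerSeries.coeff_smul]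
  have hz : PowerSeries.coeff n (PowerSeries.derivative ℝ L * L ^ (n+1)) = 0 := by
    rw [PowerSeries.coeff_mul]
    apply Finset.sum_eq_zero
    intro p hp
    rw [Finset.HasAntidiagonal.mem_antidiagonal] at hp
    rw [coeff_pow_eq_zero hL (by omega), mul_zero]
  rw [hz, smul_zero, sub_zero]
  rw [PowerSeries.coeff_mul, PowerSeries.coeff_mul]
  apply Finset.sum_congr rfl
  intro p hp
  rw [Finset.HasAntidiagonal.mem_antidiagonal] at hp
  rw [hcoeffT p.2 (by omega)]

section
variable (u imp l : ℕ → ℝ)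

-- generic: coefficient of a product
lemma coeff_mul_mk (f g : ℕ → ℝ) (n : ℕ) :
    PowerSeries.coeff n (PowerSeries.mk f * PowerSeries.mk g) =
      ∑ k ∈ Finset.range (n+1), f k * g (n - k) := by
  rw [PowerSeries.coeff_mul, Finset.Nat.sum_antidiagonal_eq_sum_range_succ_mk]
  simp

lemma shift_sum (f g : ℕ → ℝ) (n : ℕ) :
    ∑ p ∈ Finset.HasAntidiagonal.antidiagonal n, (f (p.1+1) * ((p.1:ℝ)+1)) * g p.2 =
      ∑ k ∈ Finset.range (n+2), (k:ℝ) * f k * g (n+1-k) := by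
  rw [Finset.Nat.sum_antidiagonal_eq_sum_range_succ_mk]
  have hR : ∑ k ∈ Finset.range (n+2), (k:ℝ) * f k * g (n+1-k) =
      (∑ j ∈ Finset.range (n+1), ((j+1:ℕ):ℝ) * f (j+1) * g (n+1-(j+1))) + ((0:ℕ):ℝ) * f 0 * g (n+1-0) :=
    Finset.sum_range_succ' _ _
  rw [hR]
  simp only [Nat.cast_zero, zero_mul, add_zero]
  apply Finset.sum_congr rfl
  intro j hj
  have h2 : n + 1 - (j+1) = n - j := by omega
  rw [h2]
  push_cast
  ring

-- coefficient of derivative * series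
lemma coeff_deriv_mul (f g : ℕ → ℝ) (G : PowerSeries ℝ) (hG : ∀ m, PowerSeries.coeff m G = g m) (n : ℕ) :
    PowerSeries.coeff n (PowerSeries.derivative ℝ (PowerSeries.mk f) * G) =
      ∑ k ∈ Finset.range (n+2), (k:ℝ) * f k * g (n+1-k) := by
  rw [PowerSeries.coeff_mul, ← shift_sum f g n]
  apply Finset.sum_congr rfl
  intro p hp
  rw [PowerSeries.coeff_derivative, PowerSeries.coeff_mk, hG]

end

noncomputable def nuSeq (imp : ℕ → ℝ) : ℕ → ℝ := fun i => (if i = 0 then 1 else 0) - imp i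
noncomputable def betaSeq (imp : ℕ → ℝ) : ℕ → ℝ :=
  fun m => ∑ i ∈ Finset.range (m+1), nuSeq imp i * nuSeq imp (m-i)

section
variable (e : ℕ) (cn imp : ℕ → ℝ)

lemma extract (hcn0 : cn 0 = 0)
    (hexp : (PowerSeries.mk fun n => ((Nat.factorial n : ℝ)) ^ e) =
      expPS (PowerSeries.mk fun n => cn n / (Nat.factorial n)))
    (himp : (PowerSeries.mk fun k => imp k) =
      1 - (PowerSeries.mk fun n => ((Nat.factorial n : ℝ)) ^ e)⁻¹) :
    (∀ n : ℕ, ∑ k ∈ Finset.range (n+2), imp k * ((Nat.factorial (n+1-k) : ℝ))^e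
        = ((Nat.factorial (n+1) : ℝ))^e) ∧
    (∀ n : ℕ, ((n+1:ℕ):ℝ) * (cn (n+1) / (Nat.factorial (n+1))) =
        ∑ k ∈ Finset.range (n+2), (k:ℝ) * imp k * ((Nat.factorial (n+1-k) : ℝ))^e) ∧
    (∀ m : ℕ, ∑ j ∈ Finset.range (m+1), ((Nat.factorial j : ℝ))^e * betaSeq imp (m-j)
        = nuSeq imp m) ∧
    (∀ m : ℕ, ((m+1:ℕ):ℝ) * imp (m+1) =
        ∑ j ∈ Finset.range (m+2), (j:ℝ) * ((Nat.factorial j : ℝ))^e * betaSeq imp (m+1-j)) := by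
  set u : ℕ → ℝ := fun n => ((Nat.factorial n : ℝ))^e with hu
  set l : ℕ → ℝ := fun n => cn n / (Nat.factorial n) with hl
  have hF0 : PowerSeries.constantCoeff (PowerSeries.mk u) = 1 := by
    rw [← PowerSeries.coeff_zero_eq_constantCoeff_apply, PowerSeries.coeff_mk]
    simp [hu]
  have hL0 : PowerSeries.constantCoeff (PowerSeries.mk l) = 0 := by
    rw [← PowerSeries.coeff_zero_eq_constantCoeff_apply, PowerSeries.coeff_mk]
    simp [hl, hcn0]
  have hVmk : (1 - PowerSeries.mk imp : PowerSeries ℝ) = PowerSeries.mk (nuSeq imp) := by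
    ext m
    rw [map_sub, PowerSeries.coeff_mk, PowerSeries.coeff_mk, PowerSeries.coeff_one, nuSeq]
  have hFV : PowerSeries.mk u * (1 - PowerSeries.mk imp) = 1 := by
    have hinv : (1 - PowerSeries.mk imp : PowerSeries ℝ) = (PowerSeries.mk u)⁻¹ := by
      rw [himp]; ring
    rw [hinv]
    exact PowerSeries.mul_inv_cancel _ (by rw [hF0]; exact one_ne_zero)
  have hdF : PowerSeries.derivative ℝ (PowerSeries.mk u)
      = (PowerSeries.derivative ℝ (PowerSeries.mk l)) * PowerSeries.mk u := by
    rw [hexp]; exact deriv_expPS hL0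
  have hIV : PowerSeries.derivative ℝ (1 - PowerSeries.mk imp : PowerSeries ℝ)
      = - PowerSeries.derivative ℝ (PowerSeries.mk imp) := by
    have h2 : ((1 : PowerSeries ℝ) - PowerSeries.mk imp) + PowerSeries.mk imp = 1 := by ring
    have h3 := congrArg (PowerSeries.derivative ℝ) h2
    rw [map_add, Derivation.map_one_eq_zero] at h3
    linear_combination h3
  have hdFV : (PowerSeries.derivative ℝ (PowerSeries.mk u)) * (1 - PowerSeries.mk imp)
      = PowerSeries.mk u * (PowerSeries.derivative ℝ (PowerSeries.mk imp)) := by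
    have h0 := congrArg (PowerSeries.derivative ℝ) hFV
    rw [Derivation.leibniz, Derivation.map_one_eq_zero, hIV] at h0
    simp only [smul_eq_mul] at h0
    linear_combination h0
  have hdL : PowerSeries.derivative ℝ (PowerSeries.mk l)
      = PowerSeries.mk u * (PowerSeries.derivative ℝ (PowerSeries.mk imp)) := by
    linear_combination (-(1 - PowerSeries.mk imp)) * hdF + hdFV
      + (-(PowerSeries.derivative ℝ (PowerSeries.mk l))) * hFV
  have hdI : PowerSeries.derivative ℝ (PowerSeries.mk imp)
      = (PowerSeries.derivative ℝ (PowerSeries.mk u))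
        * ((1 - PowerSeries.mk imp) * (1 - PowerSeries.mk imp)) := by
    linear_combination (-(1 - PowerSeries.mk imp)) * hdFV
      + (-(PowerSeries.derivative ℝ (PowerSeries.mk imp))) * hFV
  have hV2 : (1 - PowerSeries.mk imp) * (1 - PowerSeries.mk imp) = PowerSeries.mk (betaSeq imp) := by
    rw [hVmk]
    ext m
    rw [coeff_mul_mk, PowerSeries.coeff_mk, betaSeq]
  refine ⟨?_, ?_, ?_, ?_⟩
  · -- C1'
    intro n
    have h := congrArg (PowerSeries.coeff (n+1)) hFV
    rw [mul_comm (PowerSeries.mk u), hVmk, coeff_mul_mk, PowerSeries.coeff_one] at h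
    simp only [Nat.add_eq_zero, and_false, if_false, Nat.succ_ne_zero] at h
    have hsplit : ∑ k ∈ Finset.range (n+2), nuSeq imp k * u (n+1-k)
        = u (n+1) - ∑ k ∈ Finset.range (n+2), imp k * u (n+1-k) := by
      simp only [nuSeq, sub_mul, Finset.sum_sub_distrib]
      congr 1
      rw [Finset.sum_eq_single_of_mem 0 (by simp)]
      · simp
      · intro k _ hk
        simp [hk]
    rw [hsplit] at h
    have : ∑ k ∈ Finset.range (n+2), imp k * u (n+1-k) = u (n+1) := by linarith
    exact this
  · -- C2'
    intro n
    have h := congrArg (PowerSeries.coeff n) hdL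
    rw [mul_comm (PowerSeries.mk u)] at h
    rw [coeff_deriv_mul imp u (PowerSeries.mk u) (fun m => PowerSeries.coeff_mk m u) n] at h
    rw [PowerSeries.coeff_derivative, PowerSeries.coeff_mk] at h
    rw [← h]
    push_cast
    ring
  · -- C3a
    intro m
    have hFVV : PowerSeries.mk u * ((1 - PowerSeries.mk imp) * (1 - PowerSeries.mk imp))
        = 1 - PowerSeries.mk imp := by
      rw [← mul_assoc, hFV, one_mul]
    have h := congrArg (PowerSeries.coeff m) hFVV
    rw [hV2, hVmk, coeff_mul_mk, PowerSeries.coeff_mk] at h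
    exact h
  · -- C3b'
    intro m
    have h := congrArg (PowerSeries.coeff m) hdI
    rw [hV2] at h
    rw [coeff_deriv_mul u (betaSeq imp) (PowerSeries.mk (betaSeq imp))
      (fun j => PowerSeries.coeff_mk j _) m] at h
    rw [PowerSeries.coeff_derivative, PowerSeries.coeff_mk] at h
    rw [← h]
    push_cast
    ring
end

noncomputable def ufun (e : ℕ) : ℕ → ℝ := fun n => ((Nat.factorial n : ℝ))^e

lemma ufun_pos (e n : ℕ) : 0 < ufun e n :=
  pow_pos (by exact_mod_cast Nat.factorial_pos n) e

lemma ufun_zero (e : ℕ) : ufun e 0 = 1 := by simp [ufun]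

lemma ufun_one (e : ℕ) : ufun e 1 = 1 := by simp [ufun]

lemma ufun_succ (e n : ℕ) : ufun e (n+1) = ((n+1 : ℕ):ℝ)^e * ufun e n := by
  simp only [ufun, Nat.factorial_succ]
  push_cast
  rw [mul_pow]

lemma ufun_ge_one (e n : ℕ) : 1 ≤ ufun e n := by
  have h : (1:ℝ) ≤ (Nat.factorial n : ℝ) := by exact_mod_cast Nat.factorial_pos n
  exact one_le_pow₀ h

-- ℕ-level: k!(n-k)! anti-monotone toward the middle
lemma fac_anti : ∀ k a n : ℕ, a ≤ k → 2*k ≤ n →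
    Nat.factorial k * Nat.factorial (n-k) ≤ Nat.factorial a * Nat.factorial (n-a) := by
  intro k
  induction k with
  | zero => intro a n ha _; interval_cases a; exact le_rfl
  | succ k ih =>
    intro a n ha hn
    rcases Nat.eq_or_lt_of_le ha with rfl | ha'
    · exact le_rfl
    · have ha2 : a ≤ k := by omega
      have hstep : Nat.factorial (k+1) * Nat.factorial (n-(k+1))
          ≤ Nat.factorial k * Nat.factorial (n-k) := by
        have h1 : n - k = (n - (k+1)) + 1 := by omega
        rw [h1, Nat.factorial_succ (n-(k+1)), Nat.factorial_succ k]
        have h2 : k + 1 ≤ n - (k+1) + 1 := by omega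
        calc (k+1) * Nat.factorial k * Nat.factorial (n-(k+1))
            ≤ (n-(k+1)+1) * Nat.factorial k * Nat.factorial (n-(k+1)) := by
              apply Nat.mul_le_mul_right
              exact Nat.mul_le_mul_right _ h2
          _ = Nat.factorial k * ((n-(k+1)+1) * Nat.factorial (n-(k+1))) := by ring
      exact le_trans hstep (ih a n ha2 (by omega))

lemma ufun_prod_cast (e x y : ℕ) :
    ufun e x * ufun e y = ((Nat.factorial x * Nat.factorial y : ℕ) : ℝ)^e := by
  simp only [ufun]
  push_cast
  rw [mul_pow]

lemma ufun_anti (e a k n : ℕ) (ha : a ≤ k) (hk : k + a ≤ n) :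
    ufun e k * ufun e (n-k) ≤ ufun e a * ufun e (n-a) := by
  rw [ufun_prod_cast, ufun_prod_cast]
  apply pow_le_pow_left₀ (by positivity)
  have : (Nat.factorial k * Nat.factorial (n-k) : ℕ) ≤ Nat.factorial a * Nat.factorial (n-a) := by
    rcases le_or_gt (2*k) n with h | h
    · exact fac_anti k a n ha h
    · have h1 : n - (n-k) = k := by omega
      calc Nat.factorial k * Nat.factorial (n-k)
          = Nat.factorial (n-k) * Nat.factorial (n-(n-k)) := by rw [h1]; ring
        _ ≤ Nat.factorial a * Nat.factorial (n-a) := fac_anti (n-k) a n (by omega) (by omega)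
  exact_mod_cast this

lemma ufun_mono (e : ℕ) {m n : ℕ} (h : m ≤ n) : ufun e m ≤ ufun e n := by
  apply pow_le_pow_left₀ (by positivity)
  exact_mod_cast Nat.factorial_le h

lemma midsum (e r n : ℕ) (he : 1 ≤ e) (hn : 2*r+4 ≤ n) :
    ∑ k ∈ Finset.Icc (r+1) (n-(r+1)), ufun e k * ufun e (n-k)
      ≤ (2*ufun e (r+1) + 2*ufun e (r+2)) * ufun e (n-(r+1)) := by
  have hsplit : Finset.Icc (r+1) (n-(r+1)) =
      insert (r+1) (insert (n-r-1) (Finset.Icc (r+2) (n-r-2))) := by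
    ext x; simp only [Finset.mem_Icc, Finset.mem_insert]; omega
  rw [hsplit]
  rw [Finset.sum_insert (by simp only [Finset.mem_insert, Finset.mem_Icc]; omega)]
  rw [Finset.sum_insert (by simp only [Finset.mem_Icc]; omega)]
  have hmid : ∑ k ∈ Finset.Icc (r+2) (n-r-2), ufun e k * ufun e (n-k)
      ≤ 2 * ufun e (r+2) * ufun e (n-(r+1)) := by
    have hbd : ∀ k ∈ Finset.Icc (r+2) (n-r-2), ufun e k * ufun e (n-k)
        ≤ ufun e (r+2) * ufun e (n-(r+2)) := by
      intro k hk
      simp only [Finset.mem_Icc] at hk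
      exact ufun_anti e (r+2) k n hk.1 (by omega)
    calc ∑ k ∈ Finset.Icc (r+2) (n-r-2), ufun e k * ufun e (n-k)
        ≤ (Finset.Icc (r+2) (n-r-2)).card • (ufun e (r+2) * ufun e (n-(r+2))) :=
          Finset.sum_le_card_nsmul _ _ _ hbd
      _ = ((Finset.Icc (r+2) (n-r-2)).card : ℝ) * (ufun e (r+2) * ufun e (n-(r+2))) := by
          rw [nsmul_eq_mul]
      _ ≤ (n : ℝ) * (ufun e (r+2) * ufun e (n-(r+2))) := by
          apply mul_le_mul_of_nonneg_right _ (le_of_lt (mul_pos (ufun_pos _ _) (ufun_pos _ _)))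
          rw [Nat.card_Icc]
          exact_mod_cast (by omega : n - r - 2 + 1 - (r+2) ≤ n)
      _ ≤ 2 * ufun e (r+2) * ufun e (n-(r+1)) := by
          have h1 : n - (r+1) = (n - (r+2)) + 1 := by omega
          have h4 : ufun e (n-(r+1)) = ((n-(r+2)+1 : ℕ):ℝ)^e * ufun e (n-(r+2)) := by
            rw [h1]; exact ufun_succ e _
          rw [h4]
          have h2 : (n:ℝ) ≤ 2 * ((n-(r+2)+1 : ℕ):ℝ)^e := by
            have h3 : n ≤ 2 * (n-(r+2)+1)^e := by
              calc n ≤ 2 * (n-(r+2)+1) := by omega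
                _ ≤ 2 * (n-(r+2)+1)^e := by
                    apply Nat.mul_le_mul_left
                    exact Nat.le_self_pow (by omega) _
            exact_mod_cast h3
          calc (n : ℝ) * (ufun e (r+2) * ufun e (n-(r+2)))
              ≤ (2 * ((n-(r+2)+1 : ℕ):ℝ)^e) * (ufun e (r+2) * ufun e (n-(r+2))) := by
                apply mul_le_mul_of_nonneg_right h2 (le_of_lt (mul_pos (ufun_pos _ _) (ufun_pos _ _)))
            _ = 2 * ufun e (r+2) * (((n-(r+2)+1 : ℕ):ℝ)^e * ufun e (n-(r+2))) := by ring
  have hend : ufun e (n-r-1) * ufun e (n-(n-r-1)) = ufun e (r+1) * ufun e (n-(r+1)) := by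
    have h1 : n - (n-r-1) = r+1 := by omega
    have h2 : n - r - 1 = n - (r+1) := by omega
    rw [h1, h2]; ring
  rw [hend]
  have h3 : n - r - 1 = n - (r+1) := by omega
  linarith [hmid]

lemma sum_range_eq_head_Icc (f : ℕ → ℝ) (m : ℕ) :
    ∑ k ∈ Finset.range (m+1), f k = f 0 + ∑ k ∈ Finset.Icc 1 m, f k := by
  have h : Finset.range (m+1) = insert 0 (Finset.Icc 1 m) := by
    ext x; simp only [Finset.mem_range, Finset.mem_insert, Finset.mem_Icc]; omega
  rw [h, Finset.sum_insert (by simp)]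

lemma sum_Icc_eq_top_rest (f : ℕ → ℝ) (m : ℕ) (hm : 1 ≤ m) :
    ∑ k ∈ Finset.Icc 1 m, f k = f m + ∑ k ∈ Finset.Icc 1 (m-1), f k := by
  have h : Finset.Icc 1 m = insert m (Finset.Icc 1 (m-1)) := by
    ext x; simp only [Finset.mem_insert, Finset.mem_Icc]; omega
  rw [h, Finset.sum_insert (by simp only [Finset.mem_Icc]; omega)]

lemma split3 (f : ℕ → ℝ) (r n : ℕ) (h : 2*r+2 ≤ n) :
    ∑ k ∈ Finset.Icc 1 (n-1), f k =
      (∑ k ∈ Finset.Icc 1 r, f k) + (∑ k ∈ Finset.Icc (r+1) (n-(r+1)), f k)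
        + ∑ k ∈ Finset.Icc (n-r) (n-1), f k := by
  have e1 : Finset.Icc 1 (n-1) = Finset.Ioc 0 (n-1) := by ext x; simp; omega
  have e2 : Finset.Icc 1 r = Finset.Ioc 0 r := by ext x; simp; omega
  have e3 : Finset.Icc (r+1) (n-(r+1)) = Finset.Ioc r (n-(r+1)) := by ext x; simp
  have e4 : Finset.Icc (n-r) (n-1) = Finset.Ioc (n-(r+1)) (n-1) := by ext x; simp; omega
  rw [e1, e2, e3, e4]
  rw [Finset.sum_Ioc_consecutive f (by omega : 0 ≤ r) (by omega : r ≤ n-(r+1))]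
  rw [Finset.sum_Ioc_consecutive f (by omega : (0:ℕ) ≤ n-(r+1)) (by omega : n-(r+1) ≤ n-1)]

lemma reflectsum (f : ℕ → ℝ) (r n : ℕ) (h : r + 1 ≤ n) :
    ∑ k ∈ Finset.Icc (n-r) (n-1), f k = ∑ j ∈ Finset.Icc 1 r, f (n-j) := by
  apply Finset.sum_nbij' (fun k => n - k) (fun j => n - j)
  · intro a ha; simp only [Finset.mem_Icc] at *; omega
  · intro a ha; simp only [Finset.mem_Icc] at *; omega
  · intro a ha; simp only [Finset.mem_Icc] at *; omega
  · intro a ha; simp only [Finset.mem_Icc] at *; omega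
  · intro a ha; simp only [Finset.mem_Icc] at *
    congr 1; omega

lemma double_reindex (g h w : ℕ → ℝ) (r : ℕ) :
    ∑ j ∈ Finset.Icc 1 r, g j * ∑ i ∈ Finset.range (r-j+1), h i * w (j+i)
      = ∑ t ∈ Finset.Icc 1 r, (∑ j ∈ Finset.Icc 1 t, g j * h (t-j)) * w t := by
  have lhs : ∑ j ∈ Finset.Icc 1 r, g j * ∑ i ∈ Finset.range (r-j+1), h i * w (j+i)
      = ∑ p ∈ (Finset.Icc 1 r).sigma (fun j => Finset.range (r-j+1)),
          g p.1 * h p.2 * w (p.1 + p.2) := by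
    have step : ∑ j ∈ Finset.Icc 1 r, g j * ∑ i ∈ Finset.range (r-j+1), h i * w (j+i)
        = ∑ j ∈ Finset.Icc 1 r, ∑ i ∈ Finset.range (r-j+1), g j * h i * w (j+i) := by
      apply Finset.sum_congr rfl
      intro j _
      rw [Finset.mul_sum]
      apply Finset.sum_congr rfl
      intro i _
      ring
    rw [step]
    exact Finset.sum_sigma' _ _ _
  have rhs : ∑ t ∈ Finset.Icc 1 r, (∑ j ∈ Finset.Icc 1 t, g j * h (t-j)) * w t
      = ∑ p ∈ (Finset.Icc 1 r).sigma (fun t => Finset.Icc 1 t),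
          g p.2 * h (p.1 - p.2) * w p.1 := by
    have step : ∑ t ∈ Finset.Icc 1 r, (∑ j ∈ Finset.Icc 1 t, g j * h (t-j)) * w t
        = ∑ t ∈ Finset.Icc 1 r, ∑ j ∈ Finset.Icc 1 t, g j * h (t-j) * w t := by
      apply Finset.sum_congr rfl
      intro t _
      rw [Finset.sum_mul]
    rw [step]
    exact Finset.sum_sigma' _ _ _
  rw [lhs, rhs]
  apply Finset.sum_nbij' (fun p => ⟨p.1 + p.2, p.1⟩) (fun p => ⟨p.2, p.1 - p.2⟩)
  · intro a ha; simp only [Finset.mem_sigma, Finset.mem_Icc, Finset.mem_range] at *; omega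
  · intro a ha; simp only [Finset.mem_sigma, Finset.mem_Icc, Finset.mem_range] at *; omega
  · intro a ha
    have h1 : a.1 + a.2 - a.1 = a.2 := by omega
    simp only [h1]
  · intro a ha
    simp only [Finset.mem_sigma, Finset.mem_Icc] at ha
    have h1 : a.2 + (a.1 - a.2) = a.1 := by omega
    simp only [h1]
  · intro a ha
    simp only [Finset.mem_sigma, Finset.mem_Icc, Finset.mem_range] at ha
    have h1 : a.1 + a.2 - a.1 = a.2 := by omega
    simp only [h1]

lemma nge : ∀ (e n : ℕ), 1 ≤ e → 1 ≤ n → (n:ℝ) * ufun e (n-1) ≤ ufun e n := by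
  intro e n he hn
  obtain ⟨m, rfl⟩ : ∃ m, n = m + 1 := ⟨n - 1, by omega⟩
  rw [ufun_succ]
  simp only [Nat.add_sub_cancel]
  apply mul_le_mul_of_nonneg_right _ (le_of_lt (ufun_pos _ _))
  calc ((m+1:ℕ):ℝ) = ((m+1:ℕ):ℝ)^1 := by ring
    _ ≤ ((m+1:ℕ):ℝ)^e := by
        apply pow_le_pow_right₀ _ he
        exact_mod_cast Nat.one_le_iff_ne_zero.2 (by omega)

lemma imp_global_bound (e : ℕ) (he : 1 ≤ e) (imp : ℕ → ℝ) (himp0 : imp 0 = 0)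
    (hrec : ∀ m : ℕ, 1 ≤ m →
      imp m = ufun e m - ∑ k ∈ Finset.Icc 1 (m-1), imp k * ufun e (m-k)) :
    ∃ C : ℝ, 2 ≤ C ∧ ∀ n, |imp n| ≤ C * ufun e n := by
  set K : ℝ := 2*ufun e 1 + 2*ufun e 2 with hK
  have hKpos : 0 < K := by
    have := ufun_pos e 1; have := ufun_pos e 2; positivity
  set N : ℕ := ⌈2*K⌉₊ + 4 with hN
  set C : ℝ := 2 + ∑ k ∈ Finset.range N, |imp k| with hC
  have hC2 : 2 ≤ C := by
    have : 0 ≤ ∑ k ∈ Finset.range N, |imp k| :=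
      Finset.sum_nonneg (fun k _ => abs_nonneg _)
    linarith
  refine ⟨C, hC2, ?_⟩
  intro n
  induction n using Nat.strong_induction_on with
  | _ n ih =>
    rcases lt_or_ge n N with hn | hn
    · calc |imp n| ≤ ∑ k ∈ Finset.range N, |imp k| :=
            Finset.single_le_sum (fun k _ => abs_nonneg (imp k)) (Finset.mem_range.2 hn)
        _ ≤ C := by linarith
        _ = C * 1 := by ring
        _ ≤ C * ufun e n := by
            apply mul_le_mul_of_nonneg_left (ufun_ge_one e n) (by linarith)
    · have hn1 : 1 ≤ n := by omega
      have hn4 : 2*0 + 4 ≤ n := by omega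
      have hmid : ∑ k ∈ Finset.Icc 1 (n-1), ufun e k * ufun e (n-k) ≤ K * ufun e (n-1) := by
        have := midsum e 0 n he hn4
        simpa using this
      have habs : |imp n| ≤ ufun e n + ∑ k ∈ Finset.Icc 1 (n-1), |imp k| * ufun e (n-k) := by
        rw [hrec n hn1]
        calc |ufun e n - ∑ k ∈ Finset.Icc 1 (n-1), imp k * ufun e (n-k)|
            ≤ |ufun e n| + |∑ k ∈ Finset.Icc 1 (n-1), imp k * ufun e (n-k)| := abs_sub _ _
          _ ≤ ufun e n + ∑ k ∈ Finset.Icc 1 (n-1), |imp k| * ufun e (n-k) := by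
              apply add_le_add
              · rw [abs_of_pos (ufun_pos e n)]
              · calc |∑ k ∈ Finset.Icc 1 (n-1), imp k * ufun e (n-k)|
                    ≤ ∑ k ∈ Finset.Icc 1 (n-1), |imp k * ufun e (n-k)| :=
                      Finset.abs_sum_le_sum_abs _ _
                  _ = ∑ k ∈ Finset.Icc 1 (n-1), |imp k| * ufun e (n-k) := by
                      apply Finset.sum_congr rfl
                      intro k _
                      rw [abs_mul, abs_of_pos (ufun_pos _ _)]
      have hsum : ∑ k ∈ Finset.Icc 1 (n-1), |imp k| * ufun e (n-k)
          ≤ C * (K * ufun e (n-1)) := by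
        calc ∑ k ∈ Finset.Icc 1 (n-1), |imp k| * ufun e (n-k)
            ≤ ∑ k ∈ Finset.Icc 1 (n-1), C * (ufun e k * ufun e (n-k)) := by
              apply Finset.sum_le_sum
              intro k hk
              simp only [Finset.mem_Icc] at hk
              have := ih k (by omega)
              have h2 := le_of_lt (ufun_pos e (n-k))
              calc |imp k| * ufun e (n-k) ≤ (C * ufun e k) * ufun e (n-k) :=
                    mul_le_mul_of_nonneg_right this h2
                _ = C * (ufun e k * ufun e (n-k)) := by ring
          _ = C * ∑ k ∈ Finset.Icc 1 (n-1), ufun e k * ufun e (n-k) := by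
              rw [Finset.mul_sum]
          _ ≤ C * (K * ufun e (n-1)) := by
              apply mul_le_mul_of_nonneg_left hmid (by linarith)
      have hKn : K * ufun e (n-1) ≤ (1/2) * ufun e n := by
        have h2K : 2 * K ≤ (n:ℝ) := by
          calc 2*K ≤ (⌈2*K⌉₊ : ℝ) := Nat.le_ceil _
            _ ≤ (n:ℝ) := by exact_mod_cast (by omega : ⌈2*K⌉₊ ≤ n)
        have := nge e n he hn1
        nlinarith [ufun_pos e (n-1), ufun_pos e n]
      calc |imp n| ≤ ufun e n + C * (K * ufun e (n-1)) := by linarith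
        _ ≤ ufun e n + C * ((1/2) * ufun e n) := by nlinarith
        _ = (1 + C/2) * ufun e n := by ring
        _ ≤ C * ufun e n := by nlinarith [ufun_pos e n]

lemma abs_sum_mul_le (s : Finset ℕ) (f : ℕ → ℝ) (u : ℕ → ℝ) (hu : ∀ k, 0 < u k) :
    |∑ k ∈ s, f k * u k| ≤ ∑ k ∈ s, |f k| * u k := by
  calc |∑ k ∈ s, f k * u k| ≤ ∑ k ∈ s, |f k * u k| := Finset.abs_sum_le_sum_abs _ _
    _ = ∑ k ∈ s, |f k| * u k := by
        apply Finset.sum_congr rfl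
        intro k _
        rw [abs_mul, abs_of_pos (hu k)]

lemma imp_expansion (e : ℕ) (he : 1 ≤ e) (imp β : ℕ → ℝ)
    (C : ℝ) (hC2 : 2 ≤ C) (hCb : ∀ n, |imp n| ≤ C * ufun e n)
    (hrec : ∀ m : ℕ, 1 ≤ m →
      imp m = ufun e m - ∑ k ∈ Finset.Icc 1 (m-1), imp k * ufun e (m-k))
    (hb0 : β 0 = 1)
    (hbeta : ∀ t : ℕ, 1 ≤ t → β t = -imp t - ∑ j ∈ Finset.Icc 1 t, ufun e j * β (t-j)) :
    ∀ r : ℕ, ∃ (Cr : ℝ) (Nr : ℕ), 0 ≤ Cr ∧ ∀ n, Nr ≤ n →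
      |imp n - ∑ j ∈ Finset.range (r+1), β j * ufun e (n-j)| ≤ Cr * ufun e (n-(r+1)) := by
  intro r
  induction r using Nat.strong_induction_on with
  | _ r IH =>
  have key : ∀ r', ∃ (C' : ℝ) (N' : ℕ), 0 ≤ C' ∧ (r' < r → ∀ n, N' ≤ n →
      |imp n - ∑ j ∈ Finset.range (r'+1), β j * ufun e (n-j)| ≤ C' * ufun e (n-(r'+1))) := by
    intro r'
    rcases Nat.lt_or_ge r' r with h | h
    · obtain ⟨C', N', h0, h1⟩ := IH r' h
      exact ⟨C', N', h0, fun _ => h1⟩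
    · exact ⟨0, 0, le_rfl, fun hc => absurd hc (by omega)⟩
  choose Cf Nf hCf0 hf using key
  set Kr : ℝ := 2*ufun e (r+1) + 2*ufun e (r+2) with hKr
  have hKrpos : 0 < Kr := by
    have := ufun_pos e (r+1); have := ufun_pos e (r+2); positivity
  refine ⟨C * Kr + ∑ j ∈ Finset.Icc 1 r, ufun e j * Cf (r-j),
    2*r+4 + ∑ j ∈ Finset.range (r+1), Nf j, ?_, ?_⟩
  · have h1 : 0 ≤ C * Kr := by positivity
    have h2 : 0 ≤ ∑ j ∈ Finset.Icc 1 r, ufun e j * Cf (r-j) :=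
      Finset.sum_nonneg (fun j _ => mul_nonneg (le_of_lt (ufun_pos e j)) (hCf0 _))
    linarith
  intro n hn
  have hn4 : 2*r+4 ≤ n := by omega
  -- step 1: exact decomposition from the recurrence
  have hstep1 : imp n = ufun e n - (∑ k ∈ Finset.Icc 1 r, imp k * ufun e (n-k))
      - (∑ k ∈ Finset.Icc (r+1) (n-(r+1)), imp k * ufun e (n-k))
      - (∑ j ∈ Finset.Icc 1 r, imp (n-j) * ufun e j) := by
    rw [hrec n (by omega)]
    rw [split3 (fun k => imp k * ufun e (n-k)) r n (by omega)]
    rw [reflectsum (fun k => imp k * ufun e (n-k)) r n (by omega)]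
    have hj : ∑ j ∈ Finset.Icc 1 r, imp (n-j) * ufun e (n-(n-j))
        = ∑ j ∈ Finset.Icc 1 r, imp (n-j) * ufun e j := by
      apply Finset.sum_congr rfl
      intro j hj
      simp only [Finset.mem_Icc] at hj
      have : n - (n-j) = j := by omega
      rw [this]
    rw [hj]
    ring
  -- per-j expansion via IH
  have hEj : ∀ j ∈ Finset.Icc 1 r,
      |imp (n-j) - ∑ i ∈ Finset.range (r-j+1), β i * ufun e (n-(j+i))|
        ≤ Cf (r-j) * ufun e (n-(r+1)) := by
    intro j hj
    simp only [Finset.mem_Icc] at hj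
    have hlt : r - j < r := by omega
    have hone : Nf (r-j) ≤ ∑ j ∈ Finset.range (r+1), Nf j :=
      Finset.single_le_sum (fun i _ => Nat.zero_le _) (Finset.mem_range.2 (by omega))
    have hnj : Nf (r-j) ≤ n - j := by omega
    have hthis := hf (r-j) hlt (n-j) hnj
    have e2 : (n-j)-((r-j)+1) = n-(r+1) := by omega
    rw [e2] at hthis
    have e3 : ∑ i ∈ Finset.range (r-j+1), β i * ufun e ((n-j)-i)
        = ∑ i ∈ Finset.range (r-j+1), β i * ufun e (n-(j+i)) := by
      apply Finset.sum_congr rfl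
      intro i _
      have : (n-j)-i = n-(j+i) := by omega
      rw [this]
    rw [e3] at hthis
    exact hthis
  -- middle sum bound
  have hMid : |∑ k ∈ Finset.Icc (r+1) (n-(r+1)), imp k * ufun e (n-k)|
      ≤ C * Kr * ufun e (n-(r+1)) := by
    calc |∑ k ∈ Finset.Icc (r+1) (n-(r+1)), imp k * ufun e (n-k)|
        ≤ ∑ k ∈ Finset.Icc (r+1) (n-(r+1)), |imp k| * ufun e (n-k) :=
          abs_sum_mul_le _ _ _ (fun k => ufun_pos e (n-k))
      _ ≤ ∑ k ∈ Finset.Icc (r+1) (n-(r+1)), C * (ufun e k * ufun e (n-k)) := by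
          apply Finset.sum_le_sum
          intro k _
          have h1 := hCb k
          have h2 := le_of_lt (ufun_pos e (n-k))
          calc |imp k| * ufun e (n-k) ≤ (C * ufun e k) * ufun e (n-k) :=
                mul_le_mul_of_nonneg_right h1 h2
            _ = C * (ufun e k * ufun e (n-k)) := by ring
      _ = C * ∑ k ∈ Finset.Icc (r+1) (n-(r+1)), ufun e k * ufun e (n-k) := by
          rw [Finset.mul_sum]
      _ ≤ C * (Kr * ufun e (n-(r+1))) := by
          apply mul_le_mul_of_nonneg_left (midsum e r n he hn4) (by linarith)
      _ = C * Kr * ufun e (n-(r+1)) := by ring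
  -- the exact algebraic identity
  have hMain : ufun e n - (∑ k ∈ Finset.Icc 1 r, imp k * ufun e (n-k))
      - (∑ j ∈ Finset.Icc 1 r, ufun e j * ∑ i ∈ Finset.range (r-j+1), β i * ufun e (n-(j+i)))
      = ∑ t ∈ Finset.range (r+1), β t * ufun e (n-t) := by
    have hdr : ∑ j ∈ Finset.Icc 1 r, ufun e j * ∑ i ∈ Finset.range (r-j+1), β i * ufun e (n-(j+i))
        = ∑ t ∈ Finset.Icc 1 r, (∑ j ∈ Finset.Icc 1 t, ufun e j * β (t-j)) * ufun e (n-t) :=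
      double_reindex (ufun e) β (fun t => ufun e (n-t)) r
    rw [hdr]
    have hco : ∀ t ∈ Finset.Icc 1 r,
        (∑ j ∈ Finset.Icc 1 t, ufun e j * β (t-j)) * ufun e (n-t)
          = (-imp t - β t) * ufun e (n-t) := by
      intro t ht
      simp only [Finset.mem_Icc] at ht
      have hb := hbeta t ht.1
      have : ∑ j ∈ Finset.Icc 1 t, ufun e j * β (t-j) = -imp t - β t := by linarith
      rw [this]
    rw [Finset.sum_congr rfl hco]
    rw [sum_range_eq_head_Icc (fun t => β t * ufun e (n-t)) r]
    simp only [hb0, Nat.sub_zero, one_mul]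
    have expand : ∑ t ∈ Finset.Icc 1 r, (-imp t - β t) * ufun e (n-t)
        = -(∑ t ∈ Finset.Icc 1 r, imp t * ufun e (n-t))
          - ∑ t ∈ Finset.Icc 1 r, β t * ufun e (n-t) := by
      rw [← Finset.sum_neg_distrib, ← Finset.sum_sub_distrib]
      apply Finset.sum_congr rfl
      intro t _
      ring
    rw [expand]
    ring
  -- assemble
  have hfinal : imp n - ∑ t ∈ Finset.range (r+1), β t * ufun e (n-t)
      = -(∑ k ∈ Finset.Icc (r+1) (n-(r+1)), imp k * ufun e (n-k))
        - ∑ j ∈ Finset.Icc 1 r, ufun e j *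
            (imp (n-j) - ∑ i ∈ Finset.range (r-j+1), β i * ufun e (n-(j+i))) := by
    rw [← hMain]
    have hsplit : ∑ j ∈ Finset.Icc 1 r, ufun e j *
          (imp (n-j) - ∑ i ∈ Finset.range (r-j+1), β i * ufun e (n-(j+i)))
        = (∑ j ∈ Finset.Icc 1 r, imp (n-j) * ufun e j)
          - ∑ j ∈ Finset.Icc 1 r, ufun e j * ∑ i ∈ Finset.range (r-j+1), β i * ufun e (n-(j+i)) := by
      rw [← Finset.sum_sub_distrib]
      apply Finset.sum_congr rfl
      intro j _
      ring
    rw [hsplit, hstep1]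
    ring
  rw [hfinal]
  have hsum2 : |∑ j ∈ Finset.Icc 1 r, ufun e j *
        (imp (n-j) - ∑ i ∈ Finset.range (r-j+1), β i * ufun e (n-(j+i)))|
      ≤ (∑ j ∈ Finset.Icc 1 r, ufun e j * Cf (r-j)) * ufun e (n-(r+1)) := by
    calc |∑ j ∈ Finset.Icc 1 r, ufun e j *
          (imp (n-j) - ∑ i ∈ Finset.range (r-j+1), β i * ufun e (n-(j+i)))|
        ≤ ∑ j ∈ Finset.Icc 1 r, |ufun e j *
            (imp (n-j) - ∑ i ∈ Finset.range (r-j+1), β i * ufun e (n-(j+i)))| :=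
          Finset.abs_sum_le_sum_abs _ _
      _ ≤ ∑ j ∈ Finset.Icc 1 r, ufun e j * (Cf (r-j) * ufun e (n-(r+1))) := by
          apply Finset.sum_le_sum
          intro j hj
          rw [abs_mul, abs_of_pos (ufun_pos e j)]
          exact mul_le_mul_of_nonneg_left (hEj j hj) (le_of_lt (ufun_pos e j))
      _ = (∑ j ∈ Finset.Icc 1 r, ufun e j * Cf (r-j)) * ufun e (n-(r+1)) := by
          rw [Finset.sum_mul]
          apply Finset.sum_congr rfl
          intro j _
          ring
  calc |(-(∑ k ∈ Finset.Icc (r+1) (n-(r+1)), imp k * ufun e (n-k)))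
        - ∑ j ∈ Finset.Icc 1 r, ufun e j *
            (imp (n-j) - ∑ i ∈ Finset.range (r-j+1), β i * ufun e (n-(j+i)))|
      ≤ |∑ k ∈ Finset.Icc (r+1) (n-(r+1)), imp k * ufun e (n-k)|
        + |∑ j ∈ Finset.Icc 1 r, ufun e j *
            (imp (n-j) - ∑ i ∈ Finset.range (r-j+1), β i * ufun e (n-(j+i)))| := by
        rw [← abs_neg (∑ k ∈ Finset.Icc (r+1) (n-(r+1)), imp k * ufun e (n-k))]
        exact abs_sub _ _
    _ ≤ C * Kr * ufun e (n-(r+1))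
        + (∑ j ∈ Finset.Icc 1 r, ufun e j * Cf (r-j)) * ufun e (n-(r+1)) := by
        apply add_le_add hMid hsum2
    _ = (C * Kr + ∑ j ∈ Finset.Icc 1 r, ufun e j * Cf (r-j)) * ufun e (n-(r+1)) := by ring

lemma split3b (f : ℕ → ℝ) (r n : ℕ) (h : 2*r+2 ≤ n) :
    ∑ k ∈ Finset.Icc 1 n, f k =
      (∑ k ∈ Finset.Icc 1 r, f k) + (∑ k ∈ Finset.Icc (r+1) (n-(r+1)), f k)
        + ∑ k ∈ Finset.Icc (n-r) n, f k := by
  have e1 : Finset.Icc 1 n = Finset.Ioc 0 n := by ext x; simp; omega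
  have e2 : Finset.Icc 1 r = Finset.Ioc 0 r := by ext x; simp; omega
  have e3 : Finset.Icc (r+1) (n-(r+1)) = Finset.Ioc r (n-(r+1)) := by ext x; simp
  have e4 : Finset.Icc (n-r) n = Finset.Ioc (n-(r+1)) n := by ext x; simp; omega
  rw [e1, e2, e3, e4]
  rw [Finset.sum_Ioc_consecutive f (by omega : 0 ≤ r) (by omega : r ≤ n-(r+1))]
  rw [Finset.sum_Ioc_consecutive f (by omega : (0:ℕ) ≤ n-(r+1)) (by omega : n-(r+1) ≤ n)]

lemma reflectsum0 (f : ℕ → ℝ) (r n : ℕ) (h : r ≤ n) :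
    ∑ k ∈ Finset.Icc (n-r) n, f k = ∑ j ∈ Finset.range (r+1), f (n-j) := by
  apply Finset.sum_nbij' (fun k => n - k) (fun j => n - j)
  · intro a ha; simp only [Finset.mem_Icc, Finset.mem_range] at *; omega
  · intro a ha; simp only [Finset.mem_Icc, Finset.mem_range] at *; omega
  · intro a ha; simp only [Finset.mem_Icc] at *; omega
  · intro a ha; simp only [Finset.mem_range] at *; omega
  · intro a ha; simp only [Finset.mem_Icc] at *
    congr 1; omega

lemma ell_expansion (e : ℕ) (he : 1 ≤ e) (imp β l : ℕ → ℝ)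
    (C : ℝ) (hC2 : 2 ≤ C) (hCb : ∀ n, |imp n| ≤ C * ufun e n)
    (hl : ∀ n : ℕ, 1 ≤ n →
      (n:ℝ) * l n = ∑ k ∈ Finset.Icc 1 n, (k:ℝ) * imp k * ufun e (n-k))
    (hconv : ∀ n : ℕ, 1 ≤ n → ∑ k ∈ Finset.Icc 1 n, imp k * ufun e (n-k) = ufun e n)
    (htimp : ∀ t : ℕ, 1 ≤ t →
      (t:ℝ) * imp t = ∑ j ∈ Finset.Icc 1 t, (j:ℝ) * ufun e j * β (t-j))
    (hexpand : ∀ r : ℕ, ∃ (Cr : ℝ) (Nr : ℕ), 0 ≤ Cr ∧ ∀ n, Nr ≤ n →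
      |imp n - ∑ j ∈ Finset.range (r+1), β j * ufun e (n-j)| ≤ Cr * ufun e (n-(r+1))) :
    ∀ r : ℕ, ∃ (Cr : ℝ) (Nr : ℕ), 0 ≤ Cr ∧ ∀ n, Nr ≤ n →
      |l n - ufun e n + ∑ k ∈ Finset.Icc 1 r, imp k * ufun e (n-k)|
        ≤ Cr * ufun e (n-(r+1)) := by
  choose Cf Nf hCf0 hf using hexpand
  intro r
  set Kr : ℝ := 2*ufun e (r+1) + 2*ufun e (r+2) with hKr
  have hKrpos : 0 < Kr := by
    have := ufun_pos e (r+1); have := ufun_pos e (r+2); positivity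
  set Cr : ℝ := C * Kr + ∑ j ∈ Finset.Icc 1 r, (j:ℝ) * ufun e j * Cf (r-j) with hCr
  have hCrpos : 0 ≤ Cr := by
    have h1 : 0 ≤ C * Kr := by positivity
    have h2 : 0 ≤ ∑ j ∈ Finset.Icc 1 r, (j:ℝ) * ufun e j * Cf (r-j) :=
      Finset.sum_nonneg (fun j hj => by
        simp only [Finset.mem_Icc] at hj
        have := le_of_lt (ufun_pos e j)
        have := hCf0 (r-j)
        positivity)
    rw [hCr]; linarith
  refine ⟨Cr, 2*r+4 + ∑ j ∈ Finset.range (r+1), Nf j, hCrpos, ?_⟩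
  intro n hn
  have hn4 : 2*r+4 ≤ n := by omega
  have hn1 : 1 ≤ n := by omega
  -- abbreviations
  set Pfun : ℕ → ℝ := fun j => ∑ i ∈ Finset.range (r-j+1), β i * ufun e (n-(j+i)) with hPfun
  have h1 := hl n hn1
  have h2 := hconv n hn1
  -- weighted identity
  have hA : (n:ℝ) * (l n - ufun e n + ∑ k ∈ Finset.Icc 1 r, imp k * ufun e (n-k))
      = ∑ k ∈ Finset.Icc 1 n, ((k:ℝ) - n) * imp k * ufun e (n-k)
        + (n:ℝ) * ∑ k ∈ Finset.Icc 1 r, imp k * ufun e (n-k) := by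
    have h3 : ∑ k ∈ Finset.Icc 1 n, ((k:ℝ) - n) * imp k * ufun e (n-k)
        = (∑ k ∈ Finset.Icc 1 n, (k:ℝ) * imp k * ufun e (n-k))
          - (n:ℝ) * ∑ k ∈ Finset.Icc 1 n, imp k * ufun e (n-k) := by
      rw [Finset.mul_sum, ← Finset.sum_sub_distrib]
      apply Finset.sum_congr rfl
      intro k _
      ring
    rw [h3, ← h1, h2]
    ring
  -- split into three ranges
  have hsplit : ∑ k ∈ Finset.Icc 1 n, ((k:ℝ) - n) * imp k * ufun e (n-k) =
      (∑ k ∈ Finset.Icc 1 r, ((k:ℝ) - n) * imp k * ufun e (n-k))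
      + (∑ k ∈ Finset.Icc (r+1) (n-(r+1)), ((k:ℝ) - n) * imp k * ufun e (n-k))
      + ∑ k ∈ Finset.Icc (n-r) n, ((k:ℝ) - n) * imp k * ufun e (n-k) :=
    split3b (fun k => ((k:ℝ) - n) * imp k * ufun e (n-k)) r n (by omega)
  -- third range reflected
  have hthird : ∑ k ∈ Finset.Icc (n-r) n, ((k:ℝ) - n) * imp k * ufun e (n-k)
      = - ∑ j ∈ Finset.Icc 1 r, (j:ℝ) * imp (n-j) * ufun e j := by
    rw [reflectsum0 (fun k => ((k:ℝ) - n) * imp k * ufun e (n-k)) r n (by omega)]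
    have hterm : ∀ j ∈ Finset.range (r+1),
        (((n-j:ℕ):ℝ) - n) * imp (n-j) * ufun e (n-(n-j))
          = -((j:ℝ) * imp (n-j) * ufun e j) := by
      intro j hj
      simp only [Finset.mem_range] at hj
      have hc : ((n-j:ℕ):ℝ) = (n:ℝ) - j := by
        rw [Nat.cast_sub (by omega)]
      have hd : n - (n-j) = j := by omega
      rw [hc, hd]
      ring
    rw [Finset.sum_congr rfl hterm]
    rw [sum_range_eq_head_Icc (fun j => -((j:ℝ) * imp (n-j) * ufun e j)) r]
    simp only [Nat.cast_zero, zero_mul, neg_zero, zero_add]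
    rw [← Finset.sum_neg_distrib]
  -- first range absorbs the n * sum term
  have hfirst : (∑ k ∈ Finset.Icc 1 r, ((k:ℝ) - n) * imp k * ufun e (n-k))
      + (n:ℝ) * ∑ k ∈ Finset.Icc 1 r, imp k * ufun e (n-k)
      = ∑ k ∈ Finset.Icc 1 r, (k:ℝ) * imp k * ufun e (n-k) := by
    rw [Finset.mul_sum, ← Finset.sum_add_distrib]
    apply Finset.sum_congr rfl
    intro k _
    ring
  -- cancellation identity
  have hcancel : ∑ j ∈ Finset.Icc 1 r, ((j:ℝ) * ufun e j) * Pfun j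
      = ∑ t ∈ Finset.Icc 1 r, (t:ℝ) * imp t * ufun e (n-t) := by
    rw [hPfun]
    rw [double_reindex (fun j => (j:ℝ) * ufun e j) β (fun t => ufun e (n-t)) r]
    apply Finset.sum_congr rfl
    intro t ht
    simp only [Finset.mem_Icc] at ht
    rw [← htimp t ht.1]
  -- per-j error bound
  have hEj : ∀ j ∈ Finset.Icc 1 r, |imp (n-j) - Pfun j| ≤ Cf (r-j) * ufun e (n-(r+1)) := by
    intro j hj
    simp only [Finset.mem_Icc] at hj
    have hone : Nf (r-j) ≤ ∑ j ∈ Finset.range (r+1), Nf j :=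
      Finset.single_le_sum (fun i _ => Nat.zero_le _) (Finset.mem_range.2 (by omega))
    have hnj : Nf (r-j) ≤ n - j := by omega
    have hthis := hf (r-j) (n-j) hnj
    have e2 : (n-j)-((r-j)+1) = n-(r+1) := by omega
    rw [e2] at hthis
    have e3 : ∑ i ∈ Finset.range (r-j+1), β i * ufun e ((n-j)-i) = Pfun j := by
      rw [hPfun]
      apply Finset.sum_congr rfl
      intro i _
      have : (n-j)-i = n-(j+i) := by omega
      rw [this]
    rw [e3] at hthis
    exact hthis
  -- main identity: n * G = Mid - ∑ j (j * u j) * (imp (n-j) - Pfun j)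
  have hmain : (n:ℝ) * (l n - ufun e n + ∑ k ∈ Finset.Icc 1 r, imp k * ufun e (n-k))
      = (∑ k ∈ Finset.Icc (r+1) (n-(r+1)), ((k:ℝ) - n) * imp k * ufun e (n-k))
        - ∑ j ∈ Finset.Icc 1 r, ((j:ℝ) * ufun e j) * (imp (n-j) - Pfun j) := by
    have hsplit2 : ∑ j ∈ Finset.Icc 1 r, ((j:ℝ) * ufun e j) * (imp (n-j) - Pfun j)
        = (∑ j ∈ Finset.Icc 1 r, (j:ℝ) * imp (n-j) * ufun e j)
          - ∑ j ∈ Finset.Icc 1 r, ((j:ℝ) * ufun e j) * Pfun j := by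
      rw [← Finset.sum_sub_distrib]
      apply Finset.sum_congr rfl
      intro j _
      ring
    linarith [hsplit2, hcancel, hA, hsplit, hthird, hfirst]
  -- bound the middle
  have hMid : |∑ k ∈ Finset.Icc (r+1) (n-(r+1)), ((k:ℝ) - n) * imp k * ufun e (n-k)|
      ≤ (n:ℝ) * (C * Kr * ufun e (n-(r+1))) := by
    calc |∑ k ∈ Finset.Icc (r+1) (n-(r+1)), ((k:ℝ) - n) * imp k * ufun e (n-k)|
        ≤ ∑ k ∈ Finset.Icc (r+1) (n-(r+1)), |((k:ℝ) - n) * imp k| * ufun e (n-k) :=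
          abs_sum_mul_le _ _ _ (fun k => ufun_pos e (n-k))
      _ ≤ ∑ k ∈ Finset.Icc (r+1) (n-(r+1)), (n:ℝ) * C * (ufun e k * ufun e (n-k)) := by
          apply Finset.sum_le_sum
          intro k hk
          simp only [Finset.mem_Icc] at hk
          have hkn : |(k:ℝ) - n| ≤ (n:ℝ) := by
            rw [abs_le]
            constructor
            · have : (k:ℝ) ≥ 0 := by positivity
              linarith
            · have : (k:ℝ) ≤ (n:ℝ) := by exact_mod_cast (by omega : k ≤ n)
              linarith
          have h5 := hCb k
          have h6 := le_of_lt (ufun_pos e (n-k))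
          have h7 := le_of_lt (ufun_pos e k)
          have h8 := abs_nonneg (imp k)
          calc |((k:ℝ) - n) * imp k| * ufun e (n-k)
              = |(k:ℝ) - n| * |imp k| * ufun e (n-k) := by rw [abs_mul]
            _ ≤ (n:ℝ) * (C * ufun e k) * ufun e (n-k) := by
                apply mul_le_mul_of_nonneg_right _ h6
                apply mul_le_mul hkn h5 h8 (by positivity)
            _ = (n:ℝ) * C * (ufun e k * ufun e (n-k)) := by ring
      _ = (n:ℝ) * C * ∑ k ∈ Finset.Icc (r+1) (n-(r+1)), ufun e k * ufun e (n-k) := by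
          rw [Finset.mul_sum]
      _ ≤ (n:ℝ) * C * (Kr * ufun e (n-(r+1))) := by
          apply mul_le_mul_of_nonneg_left (midsum e r n he hn4) (by positivity)
      _ = (n:ℝ) * (C * Kr * ufun e (n-(r+1))) := by ring
  -- bound the error sum
  have hErr : |∑ j ∈ Finset.Icc 1 r, ((j:ℝ) * ufun e j) * (imp (n-j) - Pfun j)|
      ≤ (∑ j ∈ Finset.Icc 1 r, (j:ℝ) * ufun e j * Cf (r-j)) * ufun e (n-(r+1)) := by
    calc |∑ j ∈ Finset.Icc 1 r, ((j:ℝ) * ufun e j) * (imp (n-j) - Pfun j)|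
        ≤ ∑ j ∈ Finset.Icc 1 r, |((j:ℝ) * ufun e j) * (imp (n-j) - Pfun j)| :=
          Finset.abs_sum_le_sum_abs _ _
      _ ≤ ∑ j ∈ Finset.Icc 1 r, (j:ℝ) * ufun e j * (Cf (r-j) * ufun e (n-(r+1))) := by
          apply Finset.sum_le_sum
          intro j hj
          simp only [Finset.mem_Icc] at hj
          have hju : 0 ≤ (j:ℝ) * ufun e j := by
            have := le_of_lt (ufun_pos e j); positivity
          rw [abs_mul, abs_of_nonneg hju]
          exact mul_le_mul_of_nonneg_left (hEj j (Finset.mem_Icc.2 hj)) hju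
      _ = (∑ j ∈ Finset.Icc 1 r, (j:ℝ) * ufun e j * Cf (r-j)) * ufun e (n-(r+1)) := by
          rw [Finset.sum_mul]
          apply Finset.sum_congr rfl
          intro j _
          ring
  -- conclude
  have hnpos : (0:ℝ) < n := by exact_mod_cast (by omega : 0 < n)
  have hfin : (n:ℝ) * |l n - ufun e n + ∑ k ∈ Finset.Icc 1 r, imp k * ufun e (n-k)|
      ≤ (n:ℝ) * (Cr * ufun e (n-(r+1))) := by
    have habs : (n:ℝ) * |l n - ufun e n + ∑ k ∈ Finset.Icc 1 r, imp k * ufun e (n-k)|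
        = |(n:ℝ) * (l n - ufun e n + ∑ k ∈ Finset.Icc 1 r, imp k * ufun e (n-k))| := by
      rw [abs_mul, abs_of_pos hnpos]
    rw [habs, hmain]
    have hup : 0 < ufun e (n-(r+1)) := ufun_pos _ _
    have hsum_le_n : (∑ j ∈ Finset.Icc 1 r, (j:ℝ) * ufun e j * Cf (r-j)) * ufun e (n-(r+1))
        ≤ (n:ℝ) * ((∑ j ∈ Finset.Icc 1 r, (j:ℝ) * ufun e j * Cf (r-j)) * ufun e (n-(r+1))) := by
      have hs : 0 ≤ (∑ j ∈ Finset.Icc 1 r, (j:ℝ) * ufun e j * Cf (r-j)) * ufun e (n-(r+1)) := by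
        apply mul_nonneg _ (le_of_lt hup)
        apply Finset.sum_nonneg
        intro j hj
        have := le_of_lt (ufun_pos e j)
        have := hCf0 (r-j)
        positivity
      have hn1' : (1:ℝ) ≤ (n:ℝ) := by exact_mod_cast hn1
      nlinarith [hs, hn1']
    calc |(∑ k ∈ Finset.Icc (r+1) (n-(r+1)), ((k:ℝ) - n) * imp k * ufun e (n-k))
          - ∑ j ∈ Finset.Icc 1 r, ((j:ℝ) * ufun e j) * (imp (n-j) - Pfun j)|
        ≤ |∑ k ∈ Finset.Icc (r+1) (n-(r+1)), ((k:ℝ) - n) * imp k * ufun e (n-k)|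
          + |∑ j ∈ Finset.Icc 1 r, ((j:ℝ) * ufun e j) * (imp (n-j) - Pfun j)| := abs_sub _ _
      _ ≤ (n:ℝ) * (C * Kr * ufun e (n-(r+1)))
          + (∑ j ∈ Finset.Icc 1 r, (j:ℝ) * ufun e j * Cf (r-j)) * ufun e (n-(r+1)) :=
          add_le_add hMid hErr
      _ ≤ (n:ℝ) * (C * Kr * ufun e (n-(r+1)))
          + (n:ℝ) * ((∑ j ∈ Finset.Icc 1 r, (j:ℝ) * ufun e j * Cf (r-j)) * ufun e (n-(r+1))) := by
          linarith [hsum_le_n]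
      _ = (n:ℝ) * (Cr * ufun e (n-(r+1))) := by rw [hCr]; ring
  have := (mul_le_mul_iff_right₀ hnpos).1 hfin
  exact this

lemma ufun_desc (e k n : ℕ) (h : k ≤ n) :
    ufun e (n-k) * ((n.descFactorial k : ℝ))^e = ufun e n := by
  have hf := Nat.factorial_mul_descFactorial h
  have : ((Nat.factorial (n-k) * n.descFactorial k : ℕ) : ℝ)^e = ((Nat.factorial n : ℝ))^e := by
    rw [hf]
  rw [ufun, ufun]
  push_cast at this ⊢
  rw [← mul_pow]
  exact_mod_cast this

lemma desc_pos {k n : ℕ} (h : k ≤ n) : 0 < n.descFactorial k := by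
  rcases Nat.eq_zero_or_pos (n.descFactorial k) with h0 | h0
  · exact absurd (Nat.descFactorial_eq_zero_iff_lt.1 h0) (not_lt.2 h)
  · exact h0

lemma ratio_bound (e r n : ℕ) (hn : 2*(r+1) ≤ n) :
    ufun e (n-(r+1)) * (n:ℝ)^((r+1)*e) ≤ 2^((r+1)*e) * ufun e n := by
  have hD : n^(r+1) ≤ 2^(r+1) * n.descFactorial (r+1) := by
    calc n^(r+1) ≤ (2*(n-r))^(r+1) := Nat.pow_le_pow_left (by omega) _
      _ = 2^(r+1) * (n-r)^(r+1) := by rw [Nat.mul_pow]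
      _ ≤ 2^(r+1) * n.descFactorial (r+1) := by
          apply Nat.mul_le_mul_left
          have := Nat.pow_sub_le_descFactorial n (r+1)
          have h2 : n + 1 - (r+1) = n - r := by omega
          rwa [h2] at this
  have hDr : ((n:ℝ))^((r+1)*e) ≤ 2^((r+1)*e) * ((n.descFactorial (r+1) : ℝ))^e := by
    have h1 : ((n^(r+1) : ℕ) : ℝ) ≤ ((2^(r+1) * n.descFactorial (r+1) : ℕ) : ℝ) := by
      exact_mod_cast hD
    have h2 : ((n:ℝ)^(r+1))^e ≤ ((2:ℝ)^(r+1) * (n.descFactorial (r+1) : ℝ))^e := by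
      apply pow_le_pow_left₀ (by positivity)
      push_cast at h1
      exact h1
    calc ((n:ℝ))^((r+1)*e) = ((n:ℝ)^(r+1))^e := by rw [pow_mul]
      _ ≤ ((2:ℝ)^(r+1) * (n.descFactorial (r+1) : ℝ))^e := h2
      _ = 2^((r+1)*e) * ((n.descFactorial (r+1) : ℝ))^e := by
          rw [mul_pow, ← pow_mul]
  calc ufun e (n-(r+1)) * (n:ℝ)^((r+1)*e)
      ≤ ufun e (n-(r+1)) * (2^((r+1)*e) * ((n.descFactorial (r+1) : ℝ))^e) :=
        mul_le_mul_of_nonneg_left hDr (le_of_lt (ufun_pos _ _))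
    _ = 2^((r+1)*e) * (ufun e (n-(r+1)) * ((n.descFactorial (r+1) : ℝ))^e) := by ring
    _ = 2^((r+1)*e) * ufun e n := by rw [ufun_desc e (r+1) n (by omega)]

/-- asymptotics for the number of `d`-constellations of size `n`. -/
theorem constellations_asymptotics
    (d : ℕ) (hd : 3 ≤ d)
    (cn imp : ℕ → ℝ) (hcn0 : cn 0 = 0) (himp0 : imp 0 = 0)
    (hexp : (PowerSeries.mk fun n => ((Nat.factorial n : ℝ)) ^ (d - 2)) =
      expPS (PowerSeries.mk fun n => cn n / (Nat.factorial n)))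
    (himp : (PowerSeries.mk fun k => imp k) =
      1 - (PowerSeries.mk fun n => ((Nat.factorial n : ℝ)) ^ (d - 2))⁻¹) :
    ∀ r : ℕ,
      ((fun n => cn n / ((Nat.factorial n : ℝ)) ^ (d - 1) -
          (1 - ∑ k ∈ Finset.Icc 1 r, imp k / ((n.descFactorial k : ℝ)) ^ (d - 2)))
        =O[atTop] fun n => 1 / (n : ℝ) ^ ((r + 1) * (d - 2))) ∧
      ((fun n => cn n - ((Nat.factorial n : ℝ)) ^ (d - 1) *
          (1 - ∑ k ∈ Finset.Icc 1 r, imp k / ((n.descFactorial k : ℝ)) ^ (d - 2)))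
        =O[atTop] fun n =>
          ((Nat.factorial n : ℝ)) ^ (d - 1) / (n : ℝ) ^ ((r + 1) * (d - 2))) := by
  intro r
  set e : ℕ := d - 2 with he_def
  have he : 1 ≤ e := by omega
  obtain ⟨hc1, hc2, hc3, hc4⟩ := extract e cn imp hcn0 hexp himp
  set l : ℕ → ℝ := fun n => cn n / (Nat.factorial n) with hl_def
  -- glue: hconv
  have hconv : ∀ n : ℕ, 1 ≤ n → ∑ k ∈ Finset.Icc 1 n, imp k * ufun e (n-k) = ufun e n := by
    intro n hn
    obtain ⟨m, rfl⟩ : ∃ m, n = m + 1 := ⟨n-1, by omega⟩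
    have h := hc1 m
    rw [sum_range_eq_head_Icc (fun k => imp k * ((Nat.factorial (m+1-k) : ℝ))^e) (m+1)] at h
    simp only [himp0, zero_mul, zero_add] at h
    exact h
  -- glue: hrec
  have hrec : ∀ m : ℕ, 1 ≤ m →
      imp m = ufun e m - ∑ k ∈ Finset.Icc 1 (m-1), imp k * ufun e (m-k) := by
    intro m hm
    have h := hconv m hm
    rw [sum_Icc_eq_top_rest (fun k => imp k * ufun e (m-k)) m hm] at h
    have h0 : imp m * ufun e (m-m) = imp m := by
      have : m - m = 0 := by omega
      rw [this]
      have : ufun e 0 = 1 := by simp [ufun]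
      rw [this, mul_one]
    rw [h0] at h
    linarith
  -- glue: hl
  have hl : ∀ n : ℕ, 1 ≤ n →
      (n:ℝ) * l n = ∑ k ∈ Finset.Icc 1 n, (k:ℝ) * imp k * ufun e (n-k) := by
    intro n hn
    obtain ⟨m, rfl⟩ : ∃ m, n = m + 1 := ⟨n-1, by omega⟩
    have h := hc2 m
    rw [sum_range_eq_head_Icc (fun k => (k:ℝ) * imp k * ((Nat.factorial (m+1-k) : ℝ))^e) (m+1)] at h
    simp only [Nat.cast_zero, zero_mul, zero_add] at h
    exact h
  -- glue: hb0
  have hb0 : betaSeq imp 0 = 1 := by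
    simp [betaSeq, nuSeq, himp0]
  -- glue: hbeta
  have hbeta : ∀ t : ℕ, 1 ≤ t →
      betaSeq imp t = -imp t - ∑ j ∈ Finset.Icc 1 t, ufun e j * betaSeq imp (t-j) := by
    intro t ht
    have h := hc3 t
    rw [sum_range_eq_head_Icc (fun j => ((Nat.factorial j : ℝ))^e * betaSeq imp (t-j)) t] at h
    have h0 : ((Nat.factorial 0 : ℝ))^e * betaSeq imp (t-0) = betaSeq imp t := by
      simp
    rw [h0] at h
    have hnu : nuSeq imp t = -imp t := by
      simp [nuSeq, Nat.one_le_iff_ne_zero.1 ht]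
    rw [hnu] at h
    have : ∑ j ∈ Finset.Icc 1 t, ((Nat.factorial j : ℝ))^e * betaSeq imp (t-j)
        = ∑ j ∈ Finset.Icc 1 t, ufun e j * betaSeq imp (t-j) := rfl
    rw [this] at h
    linarith
  -- glue: htimp
  have htimp : ∀ t : ℕ, 1 ≤ t →
      (t:ℝ) * imp t = ∑ j ∈ Finset.Icc 1 t, (j:ℝ) * ufun e j * betaSeq imp (t-j) := by
    intro t ht
    obtain ⟨m, rfl⟩ : ∃ m, t = m + 1 := ⟨t-1, by omega⟩
    have h := hc4 m
    rw [sum_range_eq_head_Icc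
      (fun j => (j:ℝ) * ((Nat.factorial j : ℝ))^e * betaSeq imp (m+1-j)) (m+1)] at h
    simp only [Nat.cast_zero, zero_mul, zero_add] at h
    exact h
  -- analytic results
  obtain ⟨C, hC2, hCb⟩ := imp_global_bound e he imp himp0 hrec
  have hexpand := imp_expansion e he imp (betaSeq imp) C hC2 hCb hrec hb0 hbeta
  obtain ⟨Cr, Nr, hCr0, hG⟩ :=
    ell_expansion e he imp (betaSeq imp) l C hC2 hCb hl hconv htimp hexpand r
  -- the central pointwise bound
  have hA0 : (0:ℝ) ≤ Cr * 2^((r+1)*e) := by positivity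
  have hkey : ∀ n : ℕ, Nr + 2*r + 4 ≤ n →
      |cn n / ((Nat.factorial n : ℝ))^(d-1)
        - (1 - ∑ k ∈ Finset.Icc 1 r, imp k / ((n.descFactorial k : ℝ))^e)|
      ≤ (Cr * 2^((r+1)*e)) * (1 / (n:ℝ)^((r+1)*e)) := by
    intro n hn
    have hn1 : 1 ≤ n := by omega
    have hnpos : (0:ℝ) < (n:ℝ) := by exact_mod_cast hn1
    have hupos := ufun_pos e n
    have hfpos : (0:ℝ) < (Nat.factorial n : ℝ) := by exact_mod_cast Nat.factorial_pos n
    have hfrac : ∀ k ∈ Finset.Icc 1 r, imp k / ((n.descFactorial k : ℝ))^e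
        = imp k * ufun e (n-k) / ufun e n := by
      intro k hk
      simp only [Finset.mem_Icc] at hk
      have hkn : k ≤ n := by omega
      have hdesc := ufun_desc e k n hkn
      have hdpos : (0:ℝ) < ((n.descFactorial k : ℝ))^e := by
        have h9 : (0:ℝ) < (n.descFactorial k : ℝ) := by exact_mod_cast desc_pos hkn
        positivity
      rw [eq_div_iff (ne_of_gt hupos), ← hdesc]
      field_simp
    have hsum : ∑ k ∈ Finset.Icc 1 r, imp k / ((n.descFactorial k : ℝ))^e
        = (∑ k ∈ Finset.Icc 1 r, imp k * ufun e (n-k)) / ufun e n := by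
      rw [Finset.sum_congr rfl hfrac, ← Finset.sum_div]
    have hpow : ((Nat.factorial n : ℝ))^(d-1) = (Nat.factorial n : ℝ) * ufun e n := by
      have hd1 : d - 1 = e + 1 := by omega
      rw [hd1, pow_succ, ufun]
      ring
    have heq : cn n / ((Nat.factorial n : ℝ))^(d-1)
        - (1 - ∑ k ∈ Finset.Icc 1 r, imp k / ((n.descFactorial k : ℝ))^e)
        = (l n - ufun e n + ∑ k ∈ Finset.Icc 1 r, imp k * ufun e (n-k)) / ufun e n := by
      rw [hsum, hpow, hl_def]
      field_simp
      ring
    rw [heq]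
    have hGn := hG n (by omega)
    have hrb := ratio_bound e r n (by omega)
    have hnE : (0:ℝ) < (n:ℝ)^((r+1)*e) := by positivity
    calc |(l n - ufun e n + ∑ k ∈ Finset.Icc 1 r, imp k * ufun e (n-k)) / ufun e n|
        = |l n - ufun e n + ∑ k ∈ Finset.Icc 1 r, imp k * ufun e (n-k)| / ufun e n := by
          rw [abs_div, abs_of_pos hupos]
      _ ≤ (Cr * ufun e (n-(r+1))) / ufun e n := by
          apply div_le_div_of_nonneg_right hGn hupos.le
      _ ≤ (Cr * 2^((r+1)*e)) * (1 / (n:ℝ)^((r+1)*e)) := by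
          rw [mul_one_div, div_le_div_iff₀ hupos hnE]
          have h2 : Cr * (ufun e (n-(r+1)) * (n:ℝ)^((r+1)*e)) ≤ Cr * (2^((r+1)*e) * ufun e n) :=
            mul_le_mul_of_nonneg_left hrb hCr0
          nlinarith [h2]
  constructor
  · rw [Asymptotics.isBigO_iff]
    refine ⟨Cr * 2^((r+1)*e), ?_⟩
    rw [Filter.eventually_atTop]
    refine ⟨Nr + 2*r + 4, fun n hn => ?_⟩
    have hn1 : 1 ≤ n := by omega
    have hnpos : (0:ℝ) < (n:ℝ) := by exact_mod_cast hn1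
    have hnE : (0:ℝ) < (n:ℝ)^((r+1)*e) := by positivity
    rw [Real.norm_eq_abs, Real.norm_eq_abs]
    have hg : |1 / (n:ℝ)^((r+1)*e)| = 1 / (n:ℝ)^((r+1)*e) := by
      rw [abs_of_pos (by positivity)]
    rw [hg]
    exact hkey n hn
  · rw [Asymptotics.isBigO_iff]
    refine ⟨Cr * 2^((r+1)*e), ?_⟩
    rw [Filter.eventually_atTop]
    refine ⟨Nr + 2*r + 4, fun n hn => ?_⟩
    have hn1 : 1 ≤ n := by omega
    have hnpos : (0:ℝ) < (n:ℝ) := by exact_mod_cast hn1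
    have hnE : (0:ℝ) < (n:ℝ)^((r+1)*e) := by positivity
    have hfpos : (0:ℝ) < ((Nat.factorial n : ℝ))^(d-1) := by
      have : (0:ℝ) < (Nat.factorial n : ℝ) := by exact_mod_cast Nat.factorial_pos n
      positivity
    rw [Real.norm_eq_abs, Real.norm_eq_abs]
    have hsplit : cn n - ((Nat.factorial n : ℝ))^(d-1) *
          (1 - ∑ k ∈ Finset.Icc 1 r, imp k / ((n.descFactorial k : ℝ))^e)
        = ((Nat.factorial n : ℝ))^(d-1) *
          (cn n / ((Nat.factorial n : ℝ))^(d-1)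
            - (1 - ∑ k ∈ Finset.Icc 1 r, imp k / ((n.descFactorial k : ℝ))^e)) := by
      field_simp
    rw [hsplit, abs_mul, abs_of_pos hfpos]
    have hgoal2 : |((Nat.factorial n : ℝ))^(d-1) / (n:ℝ)^((r+1)*e)|
        = ((Nat.factorial n : ℝ))^(d-1) * (1 / (n:ℝ)^((r+1)*e)) := by
      rw [abs_of_pos (by positivity)]
      ring
    rw [hgoal2]
    have hk := hkey n hn
    calc ((Nat.factorial n : ℝ))^(d-1) * |cn n / ((Nat.factorial n : ℝ))^(d-1)
          - (1 - ∑ k ∈ Finset.Icc 1 r, imp k / ((n.descFactorial k : ℝ))^e)|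
        ≤ ((Nat.factorial n : ℝ))^(d-1) * ((Cr * 2^((r+1)*e)) * (1 / (n:ℝ)^((r+1)*e))) :=
          mul_le_mul_of_nonneg_left hk hfpos.le
      _ = Cr * 2^((r+1)*e) * (((Nat.factorial n : ℝ))^(d-1) * (1 / (n:ℝ)^((r+1)*e))) := by
          ring
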